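/- Let P(z) = c·∏_{j=0}^{k}(1 - z/ζⱼ) with c > 0, k ≥ 1, and each Im(ζⱼ) > 0, and define r(t) = ∫_{-∞}^{∞} e^{izt}/|P(z)|² dz. Then for t > 0, r satisfies the constant-coefficient ODE P(-iD)r(t) = 0, where D = d/dt and P(-iD) is the differential operator obtained by substituting -i·(d/dt) for z in P. -/

import Mathlib

open Complex MeasureTheory Polynomial

private lemma aux_bound {h : ℝ → ℝ} (hcont : Continuous h) (R B : ℝ)
    (hB : ∀ x : ℝ, R ≤ |x| → h x * (1 + x ^ 2) ≤ B) :
    ∃ C : ℝ, ∀ x : ℝ, h x ≤ C / (1 + x ^ 2) := by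
  obtain ⟨K, hK⟩ := (isCompact_Icc (a := -R) (b := R)).exists_bound_of_continuousOn
      ((hcont.mul (continuous_const.add (continuous_pow 2))).continuousOn)
  refine ⟨max B K, fun x => ?_⟩
  have h1 : (0:ℝ) < 1 + x ^ 2 := by positivity
  rw [le_div_iff₀ h1]
  rcases le_or_gt R |x| with hx | hx
  · exact (hB x hx).trans (le_max_left _ _)
  · have hx' : x ∈ Set.Icc (-R) R := by
      have := abs_le.mp hx.le; exact ⟨this.1, this.2⟩
    have := hK x hx'
    rw [Real.norm_eq_abs] at this
    exact ((le_abs_self _).trans this).trans (le_max_right _ _)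

theorem stmt_12 (k : ℕ) (hk : 1 ≤ k) (c : ℝ) (hc : 0 < c)
    (ζ : Fin (k + 1) → ℂ) (hζ : ∀ j, 0 < (ζ j).im)
    (P : Polynomial ℂ)
    (hP : P = Polynomial.C (c : ℂ) * ∏ j, (1 - Polynomial.C (ζ j)⁻¹ * Polynomial.X))
    (r : ℝ → ℂ)
    (hr : ∀ t : ℝ, r t = ∫ x : ℝ,
      Complex.exp (Complex.I * x * t) / (‖P.eval (x : ℂ)‖ ^ 2 : ℝ)) :
    ∀ t : ℝ, 0 < t →
      ∑ m ∈ Finset.range (k + 2),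
        P.coeff m * (-Complex.I) ^ m * iteratedDeriv m r t = 0 := by
  intro t ht
  have hζ0 : ∀ j, ζ j ≠ 0 := fun j h => by simpa [h] using (hζ j)
  -- eval formula
  have hPev : ∀ w : ℂ, P.eval w = (c : ℂ) * ∏ j, (1 - (ζ j)⁻¹ * w) := by
    intro w; rw [hP]; simp [Polynomial.eval_prod]
  -- nonvanishing in closed lower half plane
  have hPne : ∀ w : ℂ, w.im ≤ 0 → P.eval w ≠ 0 := by
    intro w hw
    rw [hPev]
    refine mul_ne_zero (by exact_mod_cast hc.ne') (Finset.prod_ne_zero_iff.2 fun j _ => ?_)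
    intro h
    have : w = ζ j := by
      have h1 : (ζ j)⁻¹ * w = 1 := by linear_combination -h
      exact ((inv_mul_eq_one₀ (hζ0 j)).mp h1).symm
    rw [this] at hw
    exact absurd (hζ j) (not_lt.2 hw)
  -- lower bound
  obtain ⟨ε, R₀, hε, hR₀, hlb⟩ :
      ∃ ε R₀ : ℝ, 0 < ε ∧ 1 ≤ R₀ ∧ ∀ w : ℂ, R₀ ≤ ‖w‖ →
        ε * ‖w‖ ^ (k+1) ≤ ‖P.eval w‖ := by
    obtain ⟨M, hM⟩ : ∃ M : ℝ, ∀ j, ‖ζ j‖ ≤ M :=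
      ⟨Finset.univ.sup' Finset.univ_nonempty (fun j => ‖ζ j‖),
        fun j => Finset.le_sup' (fun j => ‖ζ j‖) (Finset.mem_univ j)⟩
    have hzpos : ∀ j, 0 < ‖ζ j‖ := fun j => by
      simpa [norm_pos_iff] using hζ0 j
    refine ⟨c * ∏ j, (2 * ‖ζ j‖)⁻¹, max 1 (2*M), ?_, le_max_left _ _, ?_⟩
    · exact mul_pos hc (Finset.prod_pos fun j _ => inv_pos.2 (by linarith [hzpos j]))
    · intro w hw
      have key : ∀ j : Fin (k+1),
          (2 * ‖ζ j‖)⁻¹ * ‖w‖ ≤ ‖1 - (ζ j)⁻¹ * w‖ := by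
        intro j
        have hz := hzpos j
        have h2 : 2 * ‖ζ j‖ ≤ ‖w‖ := by
          have := hM j
          calc 2 * ‖ζ j‖ ≤ 2 * M := by linarith
            _ ≤ max 1 (2*M) := le_max_right _ _
            _ ≤ _ := hw
        have htri : ‖(ζ j)⁻¹ * w‖ ≤ 1 + ‖1 - (ζ j)⁻¹ * w‖ := by
          calc ‖(ζ j)⁻¹ * w‖ = ‖(1 : ℂ) - (1 - (ζ j)⁻¹ * w)‖ := by ring_nf
            _ ≤ ‖(1:ℂ)‖ + ‖1 - (ζ j)⁻¹ * w‖ := norm_sub_le _ _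
            _ = 1 + ‖1 - (ζ j)⁻¹ * w‖ := by simp
        rw [norm_mul, norm_inv] at htri
        have hfrac : (2 * ‖ζ j‖)⁻¹ * ‖w‖
            ≤ (‖ζ j‖)⁻¹ * ‖w‖ - 1 := by
          rw [mul_inv]
          have h3 : 1 ≤ (2:ℝ)⁻¹ * ((‖ζ j‖)⁻¹ * ‖w‖) := by
            rw [← mul_assoc, ← mul_inv]
            rw [le_inv_mul_iff₀ (by positivity)]
            simpa using h2
          nlinarith [h3]
        exact hfrac.trans (by linarith)
      rw [hPev, norm_mul, norm_prod, Complex.norm_real, Real.norm_eq_abs, _root_.abs_of_pos hc]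
      calc (c * ∏ j, (2 * ‖ζ j‖)⁻¹) * ‖w‖ ^ (k+1)
          = c * ∏ j : Fin (k+1), ((2 * ‖ζ j‖)⁻¹ * ‖w‖) := by
            rw [Finset.prod_mul_distrib, Finset.prod_const, Finset.card_univ, Fintype.card_fin]
            ring
        _ ≤ c * ∏ j, ‖1 - (ζ j)⁻¹ * w‖ := by
            refine mul_le_mul_of_nonneg_left (Finset.prod_le_prod (fun j _ => by positivity)
              (fun j _ => key j)) hc.le
  have hcontP : Continuous fun x : ℝ => ‖P.eval (x:ℂ)‖ :=
    continuous_norm.comp ((P.differentiable.continuous).comp Complex.continuous_ofReal)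
  have hPxne : ∀ x : ℝ, ‖P.eval (x:ℂ)‖ ≠ 0 := fun x =>
    norm_ne_zero_iff.mpr (hPne x (by simp))
  have hPxpos : ∀ x : ℝ, 0 < ‖P.eval (x:ℂ)‖ := fun x =>
    lt_of_le_of_ne (norm_nonneg _) (Ne.symm (hPxne x))
  obtain ⟨C₁, hC₁⟩ : ∃ C : ℝ, ∀ x : ℝ,
      (1 + |x| ^ (k+1)) / ‖P.eval (x:ℂ)‖ ^ 2 ≤ C / (1 + x^2) := by
    refine aux_bound ?_ R₀ (4 / ε^2) ?_
    · exact (continuous_const.add (_root_.continuous_abs.pow (k+1))).div (hcontP.pow 2)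
        (fun x => pow_ne_zero _ (hPxne x))
    · intro x hx
      have h1 : 1 ≤ |x| := hR₀.trans hx
      have hlbx := hlb x (by rwa [Complex.norm_real, Real.norm_eq_abs])
      rw [Complex.norm_real, Real.norm_eq_abs] at hlbx
      set A := ‖P.eval (x:ℂ)‖ with hA
      have hApos : 0 < A := hPxpos x
      set y := |x| ^ (k+1) with hy
      have hy1 : (1:ℝ) ≤ y := one_le_pow₀ h1
      have hx2 : x^2 ≤ y := by
        calc x^2 = |x|^2 := (_root_.sq_abs x).symm
          _ ≤ |x|^(k+1) := pow_le_pow_right₀ h1 (by omega)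
      have hA2 : ε^2 * y^2 ≤ A^2 := by nlinarith [mul_le_mul hlbx hlbx (by positivity : (0:ℝ) ≤ ε * y) hApos.le]
      rw [div_mul_eq_mul_div, div_le_div_iff₀ (by positivity) (by positivity)]
      have hprod : (1+y)*(1+x^2) ≤ 4*y^2 := by nlinarith
      nlinarith [mul_le_mul_of_nonneg_right hprod (sq_nonneg ε)]
  obtain ⟨C₂, hC₂⟩ : ∃ C : ℝ, ∀ x : ℝ,
      (‖P.eval (x:ℂ)‖)⁻¹ ≤ C / (1 + x^2) := by
    refine aux_bound ?_ R₀ (2 / ε) ?_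
    · exact hcontP.inv₀ hPxne
    · intro x hx
      have h1 : 1 ≤ |x| := hR₀.trans hx
      have hlbx := hlb x (by rwa [Complex.norm_real, Real.norm_eq_abs])
      rw [Complex.norm_real, Real.norm_eq_abs] at hlbx
      set A := ‖P.eval (x:ℂ)‖ with hA
      have hApos : 0 < A := hPxpos x
      set y := |x| ^ (k+1) with hy
      have hy1 : (1:ℝ) ≤ y := one_le_pow₀ h1
      have hx2 : x^2 ≤ y := by
        calc x^2 = |x|^2 := (_root_.sq_abs x).symm
          _ ≤ |x|^(k+1) := pow_le_pow_right₀ h1 (by omega)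
      have hεy : 0 < ε * y := by positivity
      have hinv : A⁻¹ ≤ (ε*y)⁻¹ := inv_anti₀ hεy hlbx
      calc A⁻¹ * (1+x^2) ≤ (ε*y)⁻¹ * (2*y) := by
            apply mul_le_mul hinv (by nlinarith) (by positivity) (by positivity)
        _ = 2 / ε := by field_simp
  have hnorm : ∀ (m : ℕ) (s x : ℝ),
      ‖(I*(x:ℂ))^m * cexp (I*(x:ℂ)*(s:ℂ)) / (((‖P.eval (x:ℂ)‖)^2 : ℝ) : ℂ)‖
        = |x|^m / ‖P.eval (x:ℂ)‖^2 := by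
    intro m s x
    rw [norm_div, norm_mul, norm_pow]
    have h1 : ‖I*(x:ℂ)‖ = |x| := by
      simp
    have h2 : ‖cexp (I*(x:ℂ)*(s:ℂ))‖ = 1 := by
      rw [Complex.norm_exp]
      simp [Complex.mul_re]
    have h3 : ‖(((‖P.eval (x:ℂ)‖)^2 : ℝ) : ℂ)‖ = ‖P.eval (x:ℂ)‖^2 := by
      rw [Complex.norm_real, Real.norm_eq_abs]
      exact _root_.abs_of_nonneg (by positivity)
    rw [h1, h2, h3, mul_one]
  have hble : ∀ m, m ≤ k+1 → ∀ x : ℝ,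
      |x|^m / ‖P.eval (x:ℂ)‖^2 ≤ C₁ / (1+x^2) := by
    intro m hm x
    refine le_trans ?_ (hC₁ x)
    have hnum : |x|^m ≤ 1 + |x|^(k+1) := by
      rcases le_or_gt |x| 1 with h|h
      · have h4 : |x|^m ≤ 1 := pow_le_one₀ (abs_nonneg x) h
        have h5 : (0:ℝ) ≤ |x|^(k+1) := by positivity
        linarith
      · have h4 : |x|^m ≤ |x|^(k+1) := pow_le_pow_right₀ h.le hm
        linarith
    gcongr
  have hFcont : ∀ (m : ℕ) (s : ℝ), Continuous fun x : ℝ =>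
      (I*(x:ℂ))^m * cexp (I*(x:ℂ)*(s:ℂ)) / (((‖P.eval (x:ℂ)‖)^2 : ℝ) : ℂ) := by
    intro m s
    apply Continuous.div
    · exact ((continuous_const.mul Complex.continuous_ofReal).pow m).mul
        (Complex.continuous_exp.comp
          ((continuous_const.mul Complex.continuous_ofReal).mul continuous_const))
    · exact Complex.continuous_ofReal.comp (hcontP.pow 2)
    · exact fun x => Complex.ofReal_ne_zero.2 (pow_ne_zero _ (hPxne x))
  have hbint : Integrable (fun x : ℝ => C₁ / (1+x^2)) := by
    simpa [div_eq_mul_inv] using integrable_inv_one_add_sq.const_mul C₁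
  have hFint : ∀ m, m ≤ k+1 → ∀ s : ℝ, Integrable (fun x : ℝ =>
      (I*(x:ℂ))^m * cexp (I*(x:ℂ)*(s:ℂ)) / (((‖P.eval (x:ℂ)‖)^2 : ℝ) : ℂ)) := by
    intro m hm s
    refine Integrable.mono' hbint ((hFcont m s).aestronglyMeasurable) ?_
    exact Filter.Eventually.of_forall fun x => by rw [hnorm]; exact hble m hm x
  have hDer : ∀ (m : ℕ) (x s : ℝ), HasDerivAt (fun u : ℝ =>
      (I*(x:ℂ))^m * cexp (I*(x:ℂ)*(u:ℂ)) / (((‖P.eval (x:ℂ)‖)^2 : ℝ) : ℂ))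
      ((I*(x:ℂ))^(m+1) * cexp (I*(x:ℂ)*(s:ℂ)) / (((‖P.eval (x:ℂ)‖)^2 : ℝ) : ℂ)) s := by
    intro m x s
    have h0 : HasDerivAt (fun u : ℝ => (u:ℂ)) 1 s := by
      simpa using (hasDerivAt_id s).ofReal_comp
    have h1 : HasDerivAt (fun u : ℝ => I*(x:ℂ)*(u:ℂ)) (I*(x:ℂ)) s := by
      simpa using h0.const_mul (I*(x:ℂ))
    have h2 := h1.cexp
    have h3 := (h2.const_mul ((I*(x:ℂ))^m)).div_const
      (((‖P.eval (x:ℂ)‖)^2 : ℝ) : ℂ)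
    refine h3.congr_deriv ?_
    ring
  have hDI : ∀ (m : ℕ), m ≤ k → ∀ s : ℝ, HasDerivAt
      (fun u : ℝ => ∫ x : ℝ,
        (I*(x:ℂ))^m * cexp (I*(x:ℂ)*(u:ℂ)) / (((‖P.eval (x:ℂ)‖)^2 : ℝ) : ℂ))
      (∫ x : ℝ,
        (I*(x:ℂ))^(m+1) * cexp (I*(x:ℂ)*(s:ℂ)) / (((‖P.eval (x:ℂ)‖)^2 : ℝ) : ℂ)) s := by
    intro m hm s
    exact (hasDerivAt_integral_of_dominated_loc_of_deriv_le (Metric.ball_mem_nhds s one_pos)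
      (Filter.Eventually.of_forall fun u => (hFcont m u).aestronglyMeasurable)
      (hFint m (by omega) s)
      ((hFcont (m+1) s).aestronglyMeasurable)
      (Filter.Eventually.of_forall fun x u _ => by rw [hnorm]; exact hble (m+1) (by omega) x)
      hbint
      (Filter.Eventually.of_forall fun x u _ => hDer m x u)).2
  have hIter : ∀ m, m ≤ k+1 → ∀ s : ℝ, iteratedDeriv m r s
      = ∫ x : ℝ,
        (I*(x:ℂ))^m * cexp (I*(x:ℂ)*(s:ℂ)) / (((‖P.eval (x:ℂ)‖)^2 : ℝ) : ℂ) := by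
    intro m
    induction m with
    | zero =>
      intro _ s
      rw [iteratedDeriv_zero, hr s]
      simp only [pow_zero, one_mul]
    | succ m ih =>
      intro hm s
      rw [iteratedDeriv_succ]
      have hfun : iteratedDeriv m r = fun u : ℝ => ∫ x : ℝ,
          (I*(x:ℂ))^m * cexp (I*(x:ℂ)*(u:ℂ)) / (((‖P.eval (x:ℂ)‖)^2 : ℝ) : ℂ) :=
        funext fun u => ih (by omega) u
      rw [hfun]
      exact (hDI m (by omega) s).deriv
  have hdeg : P.natDegree < k + 2 := by
    have hfac : ∀ j : Fin (k+1), (1 - Polynomial.C (ζ j)⁻¹ * Polynomial.X).natDegree ≤ 1 := by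
      intro j
      refine le_trans (Polynomial.natDegree_sub_le _ _) ?_
      rw [Polynomial.natDegree_C_mul_X _ (inv_ne_zero (hζ0 j))]
      simp
    have h2 : (∏ j : Fin (k+1), (1 - Polynomial.C (ζ j)⁻¹ * Polynomial.X)).natDegree ≤ k+1 := by
      refine le_trans (Polynomial.natDegree_prod_le _ _) (le_trans
        (Finset.sum_le_sum fun j _ => hfac j) ?_)
      simp
    have h1 : P.natDegree ≤ k+1 := by
      rw [hP]
      refine le_trans Polynomial.natDegree_mul_le ?_
      simpa [Polynomial.natDegree_C] using h2
    omega
  have hevalsum : ∀ x : ℝ, P.eval (x:ℂ) = ∑ m ∈ Finset.range (k+2), P.coeff m * (x:ℂ)^m :=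
    fun x => Polynomial.eval_eq_sum_range' hdeg _
  set Q : Polynomial ℂ := P.map (starRingEnd ℂ) with hQ
  have hQev : ∀ z : ℂ, Q.eval z = (starRingEnd ℂ) (P.eval ((starRingEnd ℂ) z)) := by
    intro z
    conv_lhs => rw [show z = (starRingEnd ℂ) ((starRingEnd ℂ) z) by simp]
    rw [hQ, Polynomial.eval_map, Polynomial.eval₂_at_apply]
  have hptwise : ∀ x : ℝ,
      (∑ m ∈ Finset.range (k+2), P.coeff m * (-I)^m *
        ((I*(x:ℂ))^m * cexp (I*(x:ℂ)*(t:ℂ)) / (((‖P.eval (x:ℂ)‖)^2 : ℝ) : ℂ)))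
      = cexp (I*(x:ℂ)*(t:ℂ)) / Q.eval (x:ℂ) := by
    intro x
    have hD : (((‖P.eval (x:ℂ)‖)^2 : ℝ) : ℂ)
        = P.eval (x:ℂ) * (starRingEnd ℂ) (P.eval (x:ℂ)) := by
      rw [Complex.mul_conj]
      norm_cast
      exact Complex.sq_norm _
    have hQx : Q.eval (x:ℂ) = (starRingEnd ℂ) (P.eval (x:ℂ)) := by
      rw [hQev, Complex.conj_ofReal]
    have hne : P.eval (x:ℂ) ≠ 0 := hPne _ (by simp)
    have hnec : (starRingEnd ℂ) (P.eval (x:ℂ)) ≠ 0 := star_ne_zero.2 hne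
    have hsum : ∑ m ∈ Finset.range (k+2),
        P.coeff m * (-I)^m * ((I*(x:ℂ))^m * cexp (I*(x:ℂ)*(t:ℂ)))
        = P.eval (x:ℂ) * cexp (I*(x:ℂ)*(t:ℂ)) := by
      rw [hevalsum x, Finset.sum_mul]
      refine Finset.sum_congr rfl fun m _ => ?_
      have hmi : (-I)^m * (I*(x:ℂ))^m = (x:ℂ)^m := by
        rw [← mul_pow]
        congr 1
        calc (-I) * (I*(x:ℂ)) = -(I*I)*(x:ℂ) := by ring
          _ = (x:ℂ) := by rw [Complex.I_mul_I]; ring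
      calc P.coeff m * (-I)^m * ((I*(x:ℂ))^m * cexp (I*(x:ℂ)*(t:ℂ)))
          = P.coeff m * ((-I)^m * (I*(x:ℂ))^m) * cexp (I*(x:ℂ)*(t:ℂ)) := by ring
        _ = P.coeff m * (x:ℂ)^m * cexp (I*(x:ℂ)*(t:ℂ)) := by rw [hmi]
    have step1 : ∀ m ∈ Finset.range (k+2),
        P.coeff m * (-I)^m *
          ((I*(x:ℂ))^m * cexp (I*(x:ℂ)*(t:ℂ)) / (((‖P.eval (x:ℂ)‖)^2 : ℝ) : ℂ))
        = (P.coeff m * (-I)^m * ((I*(x:ℂ))^m * cexp (I*(x:ℂ)*(t:ℂ))))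
            / (((‖P.eval (x:ℂ)‖)^2 : ℝ) : ℂ) := fun m _ => by ring
    rw [Finset.sum_congr rfl step1, ← Finset.sum_div, hsum, hD, hQx,
      div_eq_div_iff (mul_ne_zero hne hnec) hnec]
    ring
  have hsum_eq : ∑ m ∈ Finset.range (k+2), P.coeff m * (-I)^m * iteratedDeriv m r t
      = ∫ x : ℝ, cexp (I*(x:ℂ)*(t:ℂ)) / Q.eval (x:ℂ) := by
    have h1 : ∀ m ∈ Finset.range (k+2), P.coeff m * (-I)^m * iteratedDeriv m r t
        = ∫ x : ℝ, P.coeff m * (-I)^m *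
            ((I*(x:ℂ))^m * cexp (I*(x:ℂ)*(t:ℂ)) / (((‖P.eval (x:ℂ)‖)^2 : ℝ) : ℂ)) := by
      intro m hm
      have hm' : m ≤ k+1 := by have := Finset.mem_range.mp hm; omega
      rw [hIter m hm' t, MeasureTheory.integral_const_mul]
    rw [Finset.sum_congr rfl h1,
      ← MeasureTheory.integral_finset_sum _ (fun m hm => ((hFint m
        (by have := Finset.mem_range.mp hm; omega) t).const_mul _))]
    exact MeasureTheory.integral_congr_ae (Filter.Eventually.of_forall hptwise)
  have hQne : ∀ z : ℂ, 0 ≤ z.im → Q.eval z ≠ 0 := by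
    intro z hz
    rw [hQev]
    refine star_ne_zero.2 (hPne _ ?_)
    rw [Complex.conj_im]
    linarith
  have hQlb : ∀ z : ℂ, R₀ ≤ ‖z‖ →
      ε * ‖z‖ ^ (k+1) ≤ ‖Q.eval z‖ := by
    intro z hz
    have habs : ‖(starRingEnd ℂ) z‖ = ‖z‖ := Complex.norm_conj z
    rw [hQev, Complex.norm_conj]
    calc ε * ‖z‖ ^ (k+1) = ε * ‖(starRingEnd ℂ) z‖ ^ (k+1) := by rw [habs]
      _ ≤ _ := hlb _ (by rwa [habs])
  have hfd : ∀ z : ℂ, 0 ≤ z.im →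
      DifferentiableAt ℂ (fun z => cexp (I*z*(t:ℂ)) / Q.eval z) z := by
    intro z hz
    exact ((differentiableAt_id.const_mul I).mul_const (t:ℂ)).cexp.div
      Q.differentiableAt (hQne z hz)
  have hexpnorm : ∀ z : ℂ, 0 ≤ z.im → ‖cexp (I*z*(t:ℂ))‖ ≤ 1 := by
    intro z hz
    rw [Complex.norm_exp]
    have hre : (I*z*(t:ℂ)).re = -z.im * t := by
      simp [Complex.mul_re, Complex.mul_im]
    rw [hre, Real.exp_le_one_iff]
    nlinarith
  have hfint : Integrable (fun x : ℝ => cexp (I*(x:ℂ)*(t:ℂ)) / Q.eval (x:ℂ)) := by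
    have hb2 : Integrable (fun x : ℝ => C₂ / (1+x^2)) := by
      simpa [div_eq_mul_inv] using integrable_inv_one_add_sq.const_mul C₂
    refine Integrable.mono' hb2 ?_ (Filter.Eventually.of_forall fun x => ?_)
    · exact ((Complex.continuous_exp.comp
        ((continuous_const.mul Complex.continuous_ofReal).mul continuous_const)).div
        ((Q.differentiable.continuous).comp Complex.continuous_ofReal)
        (fun x => hQne _ (by simp))).aestronglyMeasurable
    · rw [norm_div]
      have h2 := hexpnorm (x:ℂ) (by simp)
      have h3 : ‖Q.eval (x:ℂ)‖ = ‖P.eval (x:ℂ)‖ := by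
        rw [hQev, Complex.norm_conj, Complex.conj_ofReal]
      rw [h3]
      calc ‖cexp (I*(x:ℂ)*(t:ℂ))‖ / ‖P.eval (x:ℂ)‖
          ≤ 1 / ‖P.eval (x:ℂ)‖ := by gcongr
        _ = (‖P.eval (x:ℂ)‖)⁻¹ := one_div _
        _ ≤ C₂ / (1+x^2) := hC₂ x
  have hzero : (∫ x : ℝ, cexp (I*(x:ℂ)*(t:ℂ)) / Q.eval (x:ℂ)) = 0 := by
    set f : ℂ → ℂ := fun z => cexp (I*z*(t:ℂ)) / Q.eval z with hf
    have hlim1 : Filter.Tendsto (fun R : ℝ => ∫ x in (-R)..R, f (x:ℂ)) Filter.atTop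
        (nhds (∫ x : ℝ, f (x:ℂ))) :=
      intervalIntegral_tendsto_integral hfint Filter.tendsto_neg_atTop_atBot Filter.tendsto_id
    have hfb : ∀ R : ℝ, 1 ≤ R → R₀ ≤ R → ∀ z : ℂ, 0 ≤ z.im → R ≤ ‖z‖ →
        ‖f z‖ ≤ 1 / (ε * R^2) := by
      intro R hR1 hR0 z him habs
      have hq : ε * R^2 ≤ ‖Q.eval z‖ := by
        have h5 := hQlb z (le_trans hR0 habs)
        have h6 : R^2 ≤ ‖z‖ ^ (k+1) := by
          calc R^2 ≤ R^(k+1) := pow_le_pow_right₀ hR1 (by omega)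
            _ ≤ ‖z‖ ^ (k+1) := pow_le_pow_left₀ (by linarith) habs _
        calc ε * R^2 ≤ ε * ‖z‖ ^ (k+1) :=
              mul_le_mul_of_nonneg_left h6 hε.le
          _ ≤ _ := h5
      rw [hf, norm_div]
      have h7 : ‖Q.eval z‖ = ‖Q.eval z‖ := rfl
      rw [h7]
      exact div_le_div₀ (by positivity) (hexpnorm z him) (by positivity) hq
    have hbound : ∀ R : ℝ, max R₀ 1 ≤ R → ‖∫ x in (-R)..R, f (x:ℂ)‖ ≤ 4 / (ε * R) := by
      intro R hR
      have hR1 : (1:ℝ) ≤ R := le_trans (le_max_right _ _) hR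
      have hR0 : R₀ ≤ R := le_trans (le_max_left _ _) hR
      have hRpos : (0:ℝ) < R := lt_of_lt_of_le one_pos hR1
      have hdiff : DifferentiableOn ℂ f
          (Set.uIcc (-(R:ℂ)).re ((R:ℂ)+R*I).re ×ℂ Set.uIcc (-(R:ℂ)).im ((R:ℂ)+R*I).im) := by
        intro z hz
        refine (hfd z ?_).differentiableWithinAt
        have him : z.im ∈ Set.uIcc (-(R:ℂ)).im ((R:ℂ)+R*I).im := hz.2
        have e2' : (-(R:ℂ)).im = 0 := by simp
        have e4' : ((R:ℂ)+R*I).im = R := by simp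
        rw [e2', e4', Set.uIcc_of_le (by linarith : (0:ℝ) ≤ R)] at him
        exact him.1
      have hrect := Complex.integral_boundary_rect_eq_zero_of_differentiableOn f
        (-(R:ℂ)) ((R:ℂ) + R*I) hdiff
      have e1 : (-(R:ℂ)).re = -R := by simp
      have e2 : (-(R:ℂ)).im = 0 := by simp
      have e3 : ((R:ℂ)+R*I).re = R := by simp
      have e4 : ((R:ℂ)+R*I).im = R := by simp
      rw [e1, e2, e3, e4] at hrect
      simp only [Complex.ofReal_zero, zero_mul, add_zero, smul_eq_mul] at hrect
      have hb : (∫ x in (-R)..R, f (x:ℂ))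
          = (∫ x in (-R)..R, f ((x:ℂ) + (R:ℂ)*I))
            - I * (∫ y in (0:ℝ)..R, f ((R:ℂ) + (y:ℂ)*I))
            + I * (∫ y in (0:ℝ)..R, f (((-R:ℝ):ℂ) + (y:ℂ)*I)) := by
        linear_combination hrect
      have htop : ‖∫ x in (-R)..R, f ((x:ℂ) + (R:ℂ)*I)‖ ≤ 1/(ε*R^2) * |R - (-R)| := by
        refine intervalIntegral.norm_integral_le_of_norm_le_const fun x hx => ?_
        refine hfb R hR1 hR0 _ (by simp [hRpos.le]) ?_
        have h8 := Complex.abs_im_le_norm ((x:ℂ) + (R:ℂ)*I)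
        have h9 : ((x:ℂ) + (R:ℂ)*I).im = R := by simp
        rw [h9, _root_.abs_of_pos hRpos] at h8
        exact h8
      have hright : ‖∫ y in (0:ℝ)..R, f ((R:ℂ) + (y:ℂ)*I)‖ ≤ 1/(ε*R^2) * |R - 0| := by
        refine intervalIntegral.norm_integral_le_of_norm_le_const fun y hy => ?_
        rw [Set.uIoc_of_le hRpos.le] at hy
        refine hfb R hR1 hR0 _ (by simp [hy.1.le]) ?_
        have h8 := Complex.abs_re_le_norm ((R:ℂ) + (y:ℂ)*I)
        have h9 : ((R:ℂ) + (y:ℂ)*I).re = R := by simp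
        rw [h9, _root_.abs_of_pos hRpos] at h8
        exact h8
      have hleft : ‖∫ y in (0:ℝ)..R, f (((-R:ℝ):ℂ) + (y:ℂ)*I)‖ ≤ 1/(ε*R^2) * |R - 0| := by
        refine intervalIntegral.norm_integral_le_of_norm_le_const fun y hy => ?_
        rw [Set.uIoc_of_le hRpos.le] at hy
        refine hfb R hR1 hR0 _ (by simp [hy.1.le]) ?_
        have h8 := Complex.abs_re_le_norm (((-R:ℝ):ℂ) + (y:ℂ)*I)
        have h9 : ((((-R:ℝ)):ℂ) + (y:ℂ)*I).re = -R := by simp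
        rw [h9, abs_neg, _root_.abs_of_pos hRpos] at h8
        exact h8
      have hnormI : ∀ u : ℂ, ‖I * u‖ = ‖u‖ := fun u => by
        rw [norm_mul, Complex.norm_I, one_mul]
      calc ‖∫ x in (-R)..R, f (x:ℂ)‖
          = ‖(∫ x in (-R)..R, f ((x:ℂ) + (R:ℂ)*I))
              - I * (∫ y in (0:ℝ)..R, f ((R:ℂ) + (y:ℂ)*I))
              + I * (∫ y in (0:ℝ)..R, f (((-R:ℝ):ℂ) + (y:ℂ)*I))‖ := by rw [hb]
        _ ≤ ‖(∫ x in (-R)..R, f ((x:ℂ) + (R:ℂ)*I))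
              - I * (∫ y in (0:ℝ)..R, f ((R:ℂ) + (y:ℂ)*I))‖
            + ‖I * (∫ y in (0:ℝ)..R, f (((-R:ℝ):ℂ) + (y:ℂ)*I))‖ := norm_add_le _ _
        _ ≤ ‖∫ x in (-R)..R, f ((x:ℂ) + (R:ℂ)*I)‖
            + ‖I * (∫ y in (0:ℝ)..R, f ((R:ℂ) + (y:ℂ)*I))‖
            + ‖I * (∫ y in (0:ℝ)..R, f (((-R:ℝ):ℂ) + (y:ℂ)*I))‖ := by
              gcongr
              exact norm_sub_le _ _
        _ ≤ 1/(ε*R^2) * |R - (-R)| + 1/(ε*R^2) * |R - 0| + 1/(ε*R^2) * |R - 0| := by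
              rw [hnormI, hnormI]
              gcongr
        _ = 4 / (ε * R) := by
              rw [sub_neg_eq_add, sub_zero, _root_.abs_of_pos (by linarith : (0:ℝ) < R + R),
                _root_.abs_of_pos hRpos]
              field_simp
              ring
    have hlim2 : Filter.Tendsto (fun R : ℝ => ∫ x in (-R)..R, f (x:ℂ)) Filter.atTop (nhds 0) := by
      rw [tendsto_zero_iff_norm_tendsto_zero]
      refine squeeze_zero' (Filter.Eventually.of_forall fun R => norm_nonneg _)
        (Filter.eventually_atTop.2 ⟨max R₀ 1, hbound⟩) ?_
      have h10 : Filter.Tendsto (fun R : ℝ => 4/ε * R⁻¹) Filter.atTop (nhds (4/ε * 0)) :=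
        tendsto_inv_atTop_zero.const_mul _
      rw [mul_zero] at h10
      refine h10.congr fun R => by ring
    exact tendsto_nhds_unique hlim1 hlim2
  rw [hsum_eq]
  exact hzero
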